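/- arXiv:1808.01851 — 4 statements merged into one kernel-verified Lean document; each statement's English description precedes it below -/
import Mathlib

section
/- Let a ∈ (-1,1) and let v be a C² function on ℝ^{n+1} \ {y = 0}. Define u(x,y) = v(x,y) · y·|y|^{-a}. Then at every point with y ≠ 0, div(|y|^{2-a} ∇v) = y·|y|^{-a} · div(|y|^a ∇u); in particular, u satisfies div(|y|^a ∇u) = 0 away from {y=0} if and only if v satisfies div(|y|^{2-a} ∇v) = 0 away from {y=0}. -/
noncomputable section

/-- Partial derivative in the `i`-th horizontal direction. -/
def pderivX {n : ℕ} (u : (Fin n → ℝ) × ℝ → ℝ) (i : Fin n) (X : (Fin n → ℝ) × ℝ) : ℝ :=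
  deriv (fun t => u (Function.update X.1 i t, X.2)) (X.1 i)

/-- Partial derivative in the vertical (`y`) direction. -/
def pderivY {n : ℕ} (u : (Fin n → ℝ) × ℝ → ℝ) (X : (Fin n → ℝ) × ℝ) : ℝ :=
  deriv (fun t => u (X.1, t)) X.2

/-- `La a u = div(|y|^a ∇u)`, computed in coordinates on `ℝⁿ × ℝ`. -/
def La {n : ℕ} (a : ℝ) (u : (Fin n → ℝ) × ℝ → ℝ) (X : (Fin n → ℝ) × ℝ) : ℝ :=
  (∑ i, pderivX (fun Y => |Y.2| ^ a * pderivX u i Y) i X)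
    + pderivY (fun Y => |Y.2| ^ a * pderivY u Y) X

lemma abs_rpow_hasDerivAt (c : ℝ) {t : ℝ} (ht : t ≠ 0) :
    HasDerivAt (fun s : ℝ => |s| ^ c) (c * |t| ^ c / t) t := by
  rcases ht.lt_or_gt with h | h
  · have h1 : HasDerivAt (fun s : ℝ => (-s) ^ c) (c * (-t) ^ (c - 1) * (-1)) t := by
      have := (Real.hasDerivAt_rpow_const (x := -t) (p := c)
        (Or.inl (by linarith))).comp t (hasDerivAt_neg t)
      exact this
    have heq : (fun s : ℝ => |s| ^ c) =ᶠ[nhds t] fun s => (-s) ^ c := by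
      filter_upwards [Iio_mem_nhds h] with s hs
      rw [abs_of_neg hs]
    have h2 := h1.congr_of_eventuallyEq heq
    refine h2.congr_deriv ?_
    have hnt : (0 : ℝ) < -t := by linarith
    rw [abs_of_neg h, Real.rpow_sub hnt, Real.rpow_one]
    field_simp
  · have h1 : HasDerivAt (fun s : ℝ => s ^ c) (c * t ^ (c - 1)) t :=
      Real.hasDerivAt_rpow_const (Or.inl (ne_of_gt h))
    have heq : (fun s : ℝ => |s| ^ c) =ᶠ[nhds t] fun s => s ^ c := by
      filter_upwards [Ioi_mem_nhds h] with s hs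
      rw [abs_of_pos hs]
    have h2 := h1.congr_of_eventuallyEq heq
    refine h2.congr_deriv ?_
    rw [abs_of_pos h, Real.rpow_sub h, Real.rpow_one]
    field_simp

lemma g_hasDerivAt (a : ℝ) {t : ℝ} (ht : t ≠ 0) :
    HasDerivAt (fun s : ℝ => s * |s| ^ (-a)) ((1 - a) * |t| ^ (-a)) t := by
  have h := (hasDerivAt_id t).mul (abs_rpow_hasDerivAt (-a) ht)
  refine h.congr_deriv ?_
  field_simp
  simp only [id]
  ring

lemma keyY (a : ℝ) {y : ℝ} (hy : y ≠ 0) (V : ℝ → ℝ)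
    (hV : ContDiffOn ℝ 2 V {t : ℝ | t ≠ 0}) :
    deriv (fun t => |t| ^ (2 - a) * deriv V t) y
      = y * |y| ^ (-a) * deriv (fun t => |t| ^ a *
          deriv (fun s => V s * (s * |s| ^ (-a))) t) y := by
  have hopen : IsOpen {t : ℝ | t ≠ 0} := isOpen_compl_singleton
  have hV1 : ∀ t : ℝ, t ≠ 0 → HasDerivAt V (deriv V t) t := fun t ht =>
    (((hV.differentiableOn two_ne_zero).differentiableAt
      (hopen.mem_nhds ht))).hasDerivAt
  have hVd : ContDiffOn ℝ 1 (deriv V) {t : ℝ | t ≠ 0} :=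
    hV.deriv_of_isOpen hopen (by norm_num)
  have hV2 : DifferentiableAt ℝ (deriv V) y :=
    (hVd.differentiableOn one_ne_zero).differentiableAt (hopen.mem_nhds hy)
  have hEq : (fun t => |t| ^ a * deriv (fun s => V s * (s * |s| ^ (-a))) t)
      =ᶠ[nhds y] fun t => t * deriv V t + (1 - a) * V t := by
    filter_upwards [hopen.mem_nhds hy] with t ht
    have ht' : (t : ℝ) ≠ 0 := ht
    have hprod : HasDerivAt (fun s => V s * (s * |s| ^ (-a)))
        (deriv V t * (t * |t| ^ (-a)) + V t * ((1 - a) * |t| ^ (-a))) t :=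
      (hV1 t ht').mul (g_hasDerivAt a ht')
    rw [hprod.deriv]
    have h1 : |t| ^ a * |t| ^ (-a) = 1 := by
      rw [← Real.rpow_add (abs_pos.mpr ht')]; simp
    linear_combination (t * deriv V t + (1 - a) * V t) * h1
  rw [hEq.deriv_eq]
  have hR : HasDerivAt (fun t => t * deriv V t + (1 - a) * V t)
      ((1 * deriv V y + y * deriv (deriv V) y) + (1 - a) * deriv V y) y :=
    ((hasDerivAt_id y).mul hV2.hasDerivAt).add ((hV1 y hy).const_mul (1 - a))
  rw [hR.deriv]
  have hL : HasDerivAt (fun t => |t| ^ (2 - a) * deriv V t)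
      ((2 - a) * |y| ^ (2 - a) / y * deriv V y + |y| ^ (2 - a) * deriv (deriv V) y) y :=
    (abs_rpow_hasDerivAt (2 - a) hy).mul hV2.hasDerivAt
  rw [hL.deriv]
  have h2 : |y| ^ (2 - a) = y ^ 2 * |y| ^ (-a) := by
    rw [sub_eq_add_neg, Real.rpow_add (abs_pos.mpr hy)]
    congr 1
    rw [show ((2 : ℝ)) = ((2 : ℕ) : ℝ) by norm_num, Real.rpow_natCast, sq_abs]
  rw [h2]
  field_simp
  ring

/-- If `v` is `C²` away from `{y = 0}` and `u(x,y) = v(x,y)·y·|y|^{-a}`,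
then pointwise on `{y ≠ 0}` one has `L_{2-a} v = y·|y|^{-a} · L_a u`; in particular `u` is
`L_a`-harmonic away from `{y=0}` iff `v` is `L_{2-a}`-harmonic away from `{y=0}`. -/
theorem La_antisymmetric_factorization (n : ℕ) (a : ℝ) (ha : a ∈ Set.Ioo (-1 : ℝ) 1)
    (v : (Fin n → ℝ) × ℝ → ℝ)
    (hv : ContDiffOn ℝ 2 v {X : (Fin n → ℝ) × ℝ | X.2 ≠ 0})
    (u : (Fin n → ℝ) × ℝ → ℝ)
    (hu : ∀ X : (Fin n → ℝ) × ℝ, u X = v X * (X.2 * |X.2| ^ (-a))) :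
    (∀ X : (Fin n → ℝ) × ℝ, X.2 ≠ 0 →
        La (2 - a) v X = X.2 * |X.2| ^ (-a) * La a u X) ∧
    ((∀ X : (Fin n → ℝ) × ℝ, X.2 ≠ 0 → La a u X = 0) ↔
      (∀ X : (Fin n → ℝ) × ℝ, X.2 ≠ 0 → La (2 - a) v X = 0)) := by
  have key : ∀ X : (Fin n → ℝ) × ℝ, X.2 ≠ 0 →
      La (2 - a) v X = X.2 * |X.2| ^ (-a) * La a u X := by
    intro X hX
    have habs : |X.2| ^ a * |X.2| ^ (-a) = 1 := by
      rw [← Real.rpow_add (abs_pos.mpr hX)]; simp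
    have h2 : |X.2| ^ (2 - a) = X.2 ^ 2 * |X.2| ^ (-a) := by
      rw [sub_eq_add_neg, Real.rpow_add (abs_pos.mpr hX)]
      congr 1
      rw [show ((2 : ℝ)) = ((2 : ℕ) : ℝ) by norm_num, Real.rpow_natCast, sq_abs]
    -- horizontal derivatives of u
    have hux : ∀ (i : Fin n) (Y : (Fin n → ℝ) × ℝ),
        pderivX u i Y = pderivX v i Y * (Y.2 * |Y.2| ^ (-a)) := by
      intro i Y
      unfold pderivX
      simp only [hu]
      exact deriv_mul_const_field _
    -- horizontal terms
    have hx_i : ∀ i : Fin n,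
        pderivX (fun Y => |Y.2| ^ (2 - a) * pderivX v i Y) i X
          = X.2 * |X.2| ^ (-a) *
            pderivX (fun Y => |Y.2| ^ a * pderivX u i Y) i X := by
      intro i
      show deriv (fun t => |X.2| ^ (2 - a) *
            pderivX v i (Function.update X.1 i t, X.2)) (X.1 i)
          = X.2 * |X.2| ^ (-a) * deriv (fun t => |X.2| ^ a *
            pderivX u i (Function.update X.1 i t, X.2)) (X.1 i)
      have e1 : (fun t => |X.2| ^ a * pderivX u i (Function.update X.1 i t, X.2))
          = fun t => X.2 * pderivX v i (Function.update X.1 i t, X.2) := by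
        funext t
        rw [hux]
        linear_combination pderivX v i (Function.update X.1 i t, X.2) * X.2 * habs
      rw [e1, deriv_const_mul_field, deriv_const_mul_field, h2]
      ring
    -- vertical term
    have hy_term :
        pderivY (fun Y => |Y.2| ^ (2 - a) * pderivY v Y) X
          = X.2 * |X.2| ^ (-a) *
            pderivY (fun Y => |Y.2| ^ a * pderivY u Y) X := by
      have hVcd : ContDiffOn ℝ 2 (fun s : ℝ => v (X.1, s)) {t : ℝ | t ≠ 0} := by
        apply hv.comp ((contDiff_const.prodMk contDiff_id).contDiffOn)
        intro t ht
        exact ht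
      have huV : (fun s : ℝ => u (X.1, s))
          = fun s : ℝ => v (X.1, s) * (s * |s| ^ (-a)) := by
        funext s
        exact hu (X.1, s)
      show deriv (fun t : ℝ => |t| ^ (2 - a) * deriv (fun s : ℝ => v (X.1, s)) t) X.2
          = X.2 * |X.2| ^ (-a) *
            deriv (fun t : ℝ => |t| ^ a * deriv (fun s : ℝ => u (X.1, s)) t) X.2
      rw [huV]
      exact keyY a hX (fun s : ℝ => v (X.1, s)) hVcd
    unfold La
    rw [Finset.sum_congr rfl (fun i _ => hx_i i), hy_term, ← Finset.mul_sum]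
    ring
  refine ⟨key, ?_⟩
  have hc : ∀ X : (Fin n → ℝ) × ℝ, X.2 ≠ 0 → X.2 * |X.2| ^ (-a) ≠ 0 := fun X hX =>
    mul_ne_zero hX (Real.rpow_pos_of_pos (abs_pos.mpr hX) (-a)).ne'
  constructor
  · intro h X hX
    rw [key X hX, h X hX, mul_zero]
  · intro h X hX
    have h0 := key X hX
    rw [h X hX] at h0
    rcases mul_eq_zero.mp h0.symm with h1 | h1
    · exact absurd h1 (hc X hX)
    · exact h1
end
end

section
/- Fix a ∈ (-1,1) and m ∈ ℕ. Define coefficients c(m,a,t) = (-1)^{m-t} / (2t)! · 1/(2^{m-t}(m-t)!) · ∏_{i=1}^{m-t} 1/(2i + a - 1) for 0 ≤ t ≤ m-1, and set p(x,y) = x^{2m}/(2m)! + Σ_{t=0}^{m-1} c(m,a,t) x^{2t} y^{2m-2t} for (x,y) ∈ ℝ². Then p satisfies the degenerate equation ∂_{xx} p + ∂_{yy} p + (a/y)·∂_y p = 0 at every point with y ≠ 0. -/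
noncomputable section

/-- The coefficients `c(m,a,t)` of the explicit `L_a`-harmonic homogeneous polynomials. -/
def cCoef (m : ℕ) (a : ℝ) (t : ℕ) : ℝ :=
  (-1 : ℝ) ^ (m - t) / (Nat.factorial (2 * t) : ℝ) *
    (1 / ((2 : ℝ) ^ (m - t) * (Nat.factorial (m - t) : ℝ))) *
    ∏ i ∈ Finset.Icc 1 (m - t), (1 / (2 * (i : ℝ) + a - 1))

/-- The explicit even homogeneous polynomial of degree `2m`. -/
def pPol (m : ℕ) (a : ℝ) (x y : ℝ) : ℝ :=
  x ^ (2 * m) / (Nat.factorial (2 * m) : ℝ) +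
    ∑ t ∈ Finset.range m, cCoef m a t * x ^ (2 * t) * y ^ (2 * m - 2 * t)

lemma cCoef_rec (m t : ℕ) (a : ℝ) (ha : -1 < a) (ht : t < m) :
    cCoef m a (t + 1) * ((2 * (t : ℝ) + 2) * (2 * t + 1)) +
      cCoef m a t * ((2 * (m : ℝ) - 2 * t) * (2 * (m : ℝ) - 2 * t - 1 + a)) = 0 := by
  obtain ⟨j, hj⟩ : ∃ j, m - t = j + 1 := ⟨m - t - 1, by omega⟩
  have hmt : m - (t + 1) = j := by omega
  have hm : (m : ℝ) = (t : ℝ) + j + 1 := by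
    have : m = t + j + 1 := by omega
    exact_mod_cast congrArg (Nat.cast : ℕ → ℝ) this
  unfold cCoef
  rw [hj, hmt, Finset.prod_Icc_succ_top (Nat.le_add_left 1 j)]
  have hfac : ((Nat.factorial (2 * (t + 1)) : ℝ)) =
      (2 * (t : ℝ) + 2) * ((2 * t + 1) * (Nat.factorial (2 * t) : ℝ)) := by
    have h2 : 2 * (t + 1) = (2 * t + 1) + 1 := by ring
    rw [h2, Nat.factorial_succ, Nat.factorial_succ]
    push_cast; ring
  rw [hfac]
  have hD : 2 * ((j : ℝ) + 1) + a - 1 ≠ 0 := by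
    have : (0:ℝ) ≤ (j:ℝ) := Nat.cast_nonneg j
    nlinarith
  have hP : 2 * (m : ℝ) - 2 * t - 1 + a = 2 * ((j : ℝ) + 1) + a - 1 := by rw [hm]; ring
  have hM : 2 * (m : ℝ) - 2 * t = 2 * ((j:ℝ) + 1) := by rw [hm]; ring
  rw [hP, hM]
  have hf1 : ((Nat.factorial (2 * t) : ℝ)) ≠ 0 := Nat.cast_ne_zero.mpr (Nat.factorial_ne_zero _)
  have hf2 : ((Nat.factorial j : ℝ)) ≠ 0 := Nat.cast_ne_zero.mpr (Nat.factorial_ne_zero _)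
  have hf3 : ((2:ℝ) ^ j) ≠ 0 := by positivity
  rw [Nat.factorial_succ, pow_succ, pow_succ]
  set P := ∏ i ∈ Finset.Icc 1 j, (1 / (2 * (i : ℝ) + a - 1)) with hPdef
  push_cast
  field_simp
  ring

lemma cCoef_self (m : ℕ) (a : ℝ) : cCoef m a m = 1 / (Nat.factorial (2 * m) : ℝ) := by
  unfold cCoef
  simp [Nat.sub_self]


/-- The explicit polynomial `p(x,y) = x^{2m}/(2m)! + Σ_t c(m,a,t) x^{2t} y^{2m-2t}`
satisfies the degenerate equation `∂_xx p + ∂_yy p + (a/y) ∂_y p = 0` at every point with `y ≠ 0`. -/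
theorem explicit_polynomial_La_harmonic (m : ℕ) (a : ℝ) (ha : a ∈ Set.Ioo (-1 : ℝ) 1) :
    ∀ x y : ℝ, y ≠ 0 →
      deriv (deriv (fun s => pPol m a s y)) x +
        deriv (deriv (fun t => pPol m a x t)) y +
        (a / y) * deriv (fun t => pPol m a x t) y = 0 := by
  obtain ⟨ha1, -⟩ := ha
  intro x y hy
  -- first derivative in x
  have hdx : deriv (fun s => pPol m a s y) = fun z =>
      ((2 * m : ℕ) : ℝ) * z ^ (2 * m - 1) / (Nat.factorial (2 * m) : ℝ) +
        ∑ t ∈ Finset.range m,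
          cCoef m a t * (((2 * t : ℕ) : ℝ) * z ^ (2 * t - 1)) * y ^ (2 * m - 2 * t) := by
    funext z
    apply HasDerivAt.deriv
    simp only [pPol]
    exact ((hasDerivAt_pow (2 * m) z).div_const _).add
      (HasDerivAt.fun_sum fun t _ =>
        ((hasDerivAt_pow (2 * t) z).const_mul (cCoef m a t)).mul_const _)
  have hdx2 : deriv (deriv (fun s => pPol m a s y)) x =
      ((2 * m : ℕ) : ℝ) * (((2 * m - 1 : ℕ) : ℝ) * x ^ (2 * m - 1 - 1)) /
          (Nat.factorial (2 * m) : ℝ) +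
        ∑ t ∈ Finset.range m,
          cCoef m a t * (((2 * t : ℕ) : ℝ) * (((2 * t - 1 : ℕ) : ℝ) * x ^ (2 * t - 1 - 1))) *
            y ^ (2 * m - 2 * t) := by
    rw [hdx]
    apply HasDerivAt.deriv
    exact (((hasDerivAt_pow (2 * m - 1) x).const_mul _).div_const _).add
      (HasDerivAt.fun_sum fun t _ =>
        (((hasDerivAt_pow (2 * t - 1) x).const_mul (((2 * t : ℕ) : ℝ))).const_mul
          (cCoef m a t)).mul_const _)
  -- first derivative in y
  have hdy : deriv (fun u => pPol m a x u) = fun z =>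
      ∑ t ∈ Finset.range m,
        cCoef m a t * x ^ (2 * t) * (((2 * m - 2 * t : ℕ) : ℝ) * z ^ (2 * m - 2 * t - 1)) := by
    funext z
    apply HasDerivAt.deriv
    have h : HasDerivAt (fun u => pPol m a x u)
        (0 + ∑ t ∈ Finset.range m,
          cCoef m a t * x ^ (2 * t) * (((2 * m - 2 * t : ℕ) : ℝ) * z ^ (2 * m - 2 * t - 1))) z := by
      simp only [pPol]
      exact (hasDerivAt_const z _).add
        (HasDerivAt.fun_sum fun t _ => (hasDerivAt_pow (2 * m - 2 * t) z).const_mul _)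
    simpa using h
  have hdy2 : deriv (deriv (fun u => pPol m a x u)) y =
      ∑ t ∈ Finset.range m,
        cCoef m a t * x ^ (2 * t) *
          (((2 * m - 2 * t : ℕ) : ℝ) *
            (((2 * m - 2 * t - 1 : ℕ) : ℝ) * y ^ (2 * m - 2 * t - 1 - 1))) := by
    rw [hdy]
    apply HasDerivAt.deriv
    exact HasDerivAt.fun_sum fun t _ =>
      ((hasDerivAt_pow (2 * m - 2 * t - 1) y).const_mul
        (((2 * m - 2 * t : ℕ) : ℝ))).const_mul _
  rw [hdx2, hdy2, hdy]
  rcases Nat.eq_zero_or_pos m with hm0 | hm0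
  · subst hm0; simp
  obtain ⟨n, rfl⟩ : ∃ n, m = n + 1 := ⟨m - 1, by omega⟩
  -- combine the y-terms pointwise
  have hcomb : ∀ t ∈ Finset.range (n + 1),
      cCoef (n + 1) a t * x ^ (2 * t) *
          (((2 * (n + 1) - 2 * t : ℕ) : ℝ) *
            (((2 * (n + 1) - 2 * t - 1 : ℕ) : ℝ) * y ^ (2 * (n + 1) - 2 * t - 1 - 1))) +
        (a / y) * (cCoef (n + 1) a t * x ^ (2 * t) *
          (((2 * (n + 1) - 2 * t : ℕ) : ℝ) * y ^ (2 * (n + 1) - 2 * t - 1))) =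
      cCoef (n + 1) a t * x ^ (2 * t) * y ^ (2 * (n + 1) - 2 * t - 2) *
        ((2 * ((n + 1 : ℕ) : ℝ) - 2 * t) * (2 * ((n + 1 : ℕ) : ℝ) - 2 * t - 1 + a)) := by
    intro t ht
    rw [Finset.mem_range] at ht
    have hc1 : ((2 * (n + 1) - 2 * t : ℕ) : ℝ) = 2 * ((n + 1 : ℕ) : ℝ) - 2 * t := by
      have h : (2 * t) ≤ 2 * (n + 1) := by omega
      push_cast [Nat.cast_sub h]; ring
    have hc2 : ((2 * (n + 1) - 2 * t - 1 : ℕ) : ℝ) = 2 * ((n + 1 : ℕ) : ℝ) - 2 * t - 1 := by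
      have h : 1 ≤ 2 * (n + 1) - 2 * t := by omega
      have h3 : ((2 * (n + 1) - 2 * t - 1 : ℕ) : ℝ) = ((2 * (n + 1) - 2 * t : ℕ) : ℝ) - 1 := by
        push_cast [Nat.cast_sub h]; ring
      rw [h3, hc1]
    have h1 : 2 * (n + 1) - 2 * t - 1 - 1 = 2 * (n + 1) - 2 * t - 2 := by omega
    have h2 : 2 * (n + 1) - 2 * t - 1 = (2 * (n + 1) - 2 * t - 2) + 1 := by omega
    rw [hc1, hc2, h1, h2, pow_succ]
    field_simp
  rw [add_assoc, Finset.mul_sum, ← Finset.sum_add_distrib, Finset.sum_congr rfl hcomb]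
  -- reindex the x-sum
  rw [Finset.sum_range_succ' (fun t => cCoef (n + 1) a t *
      (((2 * t : ℕ) : ℝ) * (((2 * t - 1 : ℕ) : ℝ) * x ^ (2 * t - 1 - 1))) *
        y ^ (2 * (n + 1) - 2 * t)) n]
  rw [Finset.sum_range_succ (fun t => cCoef (n + 1) a t * x ^ (2 * t) *
      y ^ (2 * (n + 1) - 2 * t - 2) *
        ((2 * ((n + 1 : ℕ) : ℝ) - 2 * t) * (2 * ((n + 1 : ℕ) : ℝ) - 2 * t - 1 + a))) n]
  have hzero : cCoef (n + 1) a 0 *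
      (((2 * 0 : ℕ) : ℝ) * (((2 * 0 - 1 : ℕ) : ℝ) * x ^ (2 * 0 - 1 - 1))) *
        y ^ (2 * (n + 1) - 2 * 0) = 0 := by norm_num
  rw [hzero, add_zero]
  -- pairwise cancellation in the shifted sums
  have hpair : ∀ t ∈ Finset.range n,
      cCoef (n + 1) a (t + 1) * (((2 * (t + 1) : ℕ) : ℝ) *
          (((2 * (t + 1) - 1 : ℕ) : ℝ) * x ^ (2 * (t + 1) - 1 - 1))) *
            y ^ (2 * (n + 1) - 2 * (t + 1)) +
        cCoef (n + 1) a t * x ^ (2 * t) * y ^ (2 * (n + 1) - 2 * t - 2) *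
          ((2 * ((n + 1 : ℕ) : ℝ) - 2 * t) * (2 * ((n + 1 : ℕ) : ℝ) - 2 * t - 1 + a)) = 0 := by
    intro t ht
    rw [Finset.mem_range] at ht
    have e1 : 2 * (t + 1) - 1 - 1 = 2 * t := by omega
    have e2 : 2 * (n + 1) - 2 * (t + 1) = 2 * (n + 1) - 2 * t - 2 := by omega
    have e3 : ((2 * (t + 1) : ℕ) : ℝ) = 2 * (t : ℝ) + 2 := by push_cast; ring
    have e4 : ((2 * (t + 1) - 1 : ℕ) : ℝ) = 2 * (t : ℝ) + 1 := by
      have h : 2 * (t + 1) - 1 = 2 * t + 1 := by omega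
      rw [h]; push_cast; ring
    rw [e1, e2, e3, e4]
    have hb := cCoef_rec (n + 1) t a ha1 (by omega)
    linear_combination (x ^ (2 * t) * y ^ (2 * (n + 1) - 2 * t - 2)) * hb
  have hsums : (∑ t ∈ Finset.range n, cCoef (n + 1) a (t + 1) * (((2 * (t + 1) : ℕ) : ℝ) *
          (((2 * (t + 1) - 1 : ℕ) : ℝ) * x ^ (2 * (t + 1) - 1 - 1))) *
            y ^ (2 * (n + 1) - 2 * (t + 1))) +
      (∑ t ∈ Finset.range n, cCoef (n + 1) a t * x ^ (2 * t) * y ^ (2 * (n + 1) - 2 * t - 2) *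
          ((2 * ((n + 1 : ℕ) : ℝ) - 2 * t) * (2 * ((n + 1 : ℕ) : ℝ) - 2 * t - 1 + a))) = 0 := by
    rw [← Finset.sum_add_distrib]
    exact Finset.sum_eq_zero hpair
  -- boundary cancellation
  have hcm : cCoef (n + 1) a (n + 1) = 1 / (Nat.factorial (2 * (n + 1)) : ℝ) :=
    cCoef_self (n + 1) a
  have hb := cCoef_rec (n + 1) n a ha1 (by omega)
  rw [hcm] at hb
  have e5 : 2 * (n + 1) - 1 - 1 = 2 * n := by omega
  have e6 : 2 * (n + 1) - 2 * n - 2 = 0 := by omega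
  have c7 : ((2 * (n + 1) : ℕ) : ℝ) = 2 * (n : ℝ) + 2 := by push_cast; ring
  have c8 : ((2 * (n + 1) - 1 : ℕ) : ℝ) = 2 * (n : ℝ) + 1 := by
    have h : 2 * (n + 1) - 1 = 2 * n + 1 := by omega
    rw [h]; push_cast; ring
  have hbound : ((2 * (n + 1) : ℕ) : ℝ) * (((2 * (n + 1) - 1 : ℕ) : ℝ) *
        x ^ (2 * (n + 1) - 1 - 1)) / (Nat.factorial (2 * (n + 1)) : ℝ) +
      cCoef (n + 1) a n * x ^ (2 * n) * y ^ (2 * (n + 1) - 2 * n - 2) *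
        ((2 * ((n + 1 : ℕ) : ℝ) - 2 * n) * (2 * ((n + 1 : ℕ) : ℝ) - 2 * n - 1 + a)) = 0 := by
    rw [e5, e6, c7, c8, pow_zero]
    linear_combination x ^ (2 * n) * hb
  linarith [hsums, hbound]
end
end

section
/- Let a ∈ (-1,1), and let p : ℝ^{n+1} → ℝ be a polynomial that is homogeneous of degree k ≥ 2. Suppose p vanishes to order k at a point Z ∈ ℝ^{n+1}, i.e. D^ν p(Z) = 0 for every multi-index ν with |ν| ≤ k−1. Then p is invariant under translation by Z: p(X + Z) = p(X) for all X ∈ ℝ^{n+1}. Moreover, the set Γ_k(p) = {Z : D^ν p(Z) = 0 for all |ν| ≤ k−1} is a vector subspace of ℝ^{n+1}. -/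
open MvPolynomial

section Aux

variable {E F : Type*} [NormedAddCommGroup E] [NormedSpace ℝ E]
  [NormedAddCommGroup F] [NormedSpace ℝ F]

lemma my_fderiv_comp_add (g : E → F) (c x : E) :
    fderiv ℝ (fun y => g (y + c)) x = fderiv ℝ g (x + c) := by
  by_cases h : DifferentiableAt ℝ g (x + c)
  · have h1 : HasFDerivAt (fun y => g (y + c)) (fderiv ℝ g (x + c)) x := by
      have h2 := h.hasFDerivAt.comp x ((hasFDerivAt_id x).add_const c)
      exact h2
    exact h1.fderiv
  · have h2 : ¬ DifferentiableAt ℝ (fun y => g (y + c)) x := by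
      intro hd
      apply h
      have h4 : ((fun y => g (y + c)) ∘ fun y : E => y + -c) = g := by
        funext y; simp
      have h3 : DifferentiableAt ℝ ((fun y => g (y + c)) ∘ fun y : E => y + -c) (x + c) := by
        apply DifferentiableAt.comp
        · rw [show (x + c) + -c = x by abel]; exact hd
        · exact differentiableAt_id.add_const _
      rw [h4] at h3; exact h3
    rw [fderiv_zero_of_not_differentiableAt h, fderiv_zero_of_not_differentiableAt h2]

lemma my_iteratedFDeriv_comp_add (g : E → F) (c : E) (j : ℕ) :
    iteratedFDeriv ℝ j (fun y => g (y + c)) = fun x => iteratedFDeriv ℝ j g (x + c) := by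
  induction j with
  | zero => funext x; ext m; simp
  | succ j IH =>
    funext x
    ext m
    rw [iteratedFDeriv_succ_apply_left, iteratedFDeriv_succ_apply_left, IH,
      my_fderiv_comp_add]

end Aux

lemma my_contDiff_eval {m : ℕ} (P : MvPolynomial (Fin m) ℝ) :
    ContDiff ℝ ⊤ (fun X : EuclideanSpace ℝ (Fin m) => MvPolynomial.eval (fun i => X i) P) := by
  induction P using MvPolynomial.induction_on with
  | C a => simpa using contDiff_const (c := a)
  | add p q hp hq => simpa using hp.add hq
  | mul_X p i hp =>
    have h2 : ContDiff ℝ ⊤ (fun X : EuclideanSpace ℝ (Fin m) => X i) :=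
      (EuclideanSpace.proj (𝕜 := ℝ) i).contDiff
    simpa using hp.mul h2

lemma my_support_sum {m k : ℕ} {P : MvPolynomial (Fin m) ℝ} (hP : P.IsHomogeneous k)
    {d : Fin m →₀ ℕ} (hd : d ∈ P.support) : ∑ i ∈ d.support, d i = k := by
  have h1 : (Finsupp.weight 1) d = k := hP (MvPolynomial.mem_support_iff.mp hd)
  change (Finsupp.weight fun _ => 1) d = k at h1
  rw [← Finsupp.degree_eq_weight_one] at h1
  exact h1

lemma my_eval_smul {m k : ℕ} {P : MvPolynomial (Fin m) ℝ} (hP : P.IsHomogeneous k)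
    (t : ℝ) (x : Fin m → ℝ) :
    MvPolynomial.eval (fun i => t * x i) P = t ^ k * MvPolynomial.eval x P := by
  rw [MvPolynomial.eval_eq, MvPolynomial.eval_eq, Finset.mul_sum]
  refine Finset.sum_congr rfl fun d hd => ?_
  have hdeg : ∑ i ∈ d.support, d i = k := my_support_sum hP hd
  have h2 : ∏ i ∈ d.support, (t * x i) ^ d i = t ^ k * ∏ i ∈ d.support, x i ^ d i := by
    simp_rw [mul_pow]
    rw [Finset.prod_mul_distrib, Finset.prod_pow_eq_pow_sum, hdeg]
  rw [h2]; ring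

lemma my_eval_eval₂ {m : ℕ} (P : MvPolynomial (Fin m) ℝ) (g : Fin m → Polynomial ℝ) (t : ℝ) :
    (MvPolynomial.eval₂ Polynomial.C g P).eval t
      = MvPolynomial.eval (fun i => (g i).eval t) P := by
  induction P using MvPolynomial.induction_on with
  | C a => simp
  | add p q hp hq => simp [hp, hq]
  | mul_X p i hp => simp [hp]

lemma my_natDegree_le {m k : ℕ} {P : MvPolynomial (Fin m) ℝ} (hP : P.IsHomogeneous k)
    (u v : Fin m → ℝ) :
    (MvPolynomial.eval₂ Polynomial.C
      (fun i => Polynomial.C (u i) + Polynomial.C (v i) * Polynomial.X) P).natDegree ≤ k := by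
  rw [MvPolynomial.eval₂_eq]
  refine Polynomial.natDegree_sum_le_of_forall_le _ _ fun d hd => ?_
  refine (Polynomial.natDegree_C_mul_le _ _).trans ?_
  refine (Polynomial.natDegree_prod_le _ _).trans ?_
  have h1 : ∀ i ∈ d.support,
      ((Polynomial.C (u i) + Polynomial.C (v i) * Polynomial.X) ^ d i).natDegree ≤ d i := by
    intro i _
    refine Polynomial.natDegree_pow_le.trans ?_
    have h2 : (Polynomial.C (u i) + Polynomial.C (v i) * Polynomial.X).natDegree ≤ 1 := by
      refine (Polynomial.natDegree_add_le _ _).trans (max_le (by simp) ?_)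
      exact (Polynomial.natDegree_C_mul_le _ _).trans (by simp)
    calc d i * (Polynomial.C (u i) + Polynomial.C (v i) * Polynomial.X).natDegree
        ≤ d i * 1 := Nat.mul_le_mul_left _ h2
      _ = d i := Nat.mul_one _
  have h3 : ∑ i ∈ d.support,
      ((Polynomial.C (u i) + Polynomial.C (v i) * Polynomial.X) ^ d i).natDegree
      ≤ ∑ i ∈ d.support, d i := Finset.sum_le_sum h1
  exact h3.trans (le_of_eq (my_support_sum hP hd))

lemma my_deriv_iterate (j : ℕ) : ∀ r : Polynomial ℝ,
    deriv^[j] (fun t : ℝ => r.eval t) = fun t => (Polynomial.derivative^[j] r).eval t := by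
  induction j with
  | zero => intro r; simp
  | succ i IH =>
    intro r
    have hder : deriv (fun t : ℝ => r.eval t) = fun t => (Polynomial.derivative r).eval t := by
      funext t
      exact Polynomial.deriv (p := r)
    rw [Function.iterate_succ_apply, Function.iterate_succ_apply, hder]
    exact IH _

/-- Key lemma: if all derivatives of order `< k` of `p` vanish at `W`, then `p` is invariant
under translation by `W`. -/
lemma my_key {n k : ℕ}
    {P : MvPolynomial (Fin (n + 1)) ℝ} (hP : P.IsHomogeneous k)
    {p : EuclideanSpace ℝ (Fin (n + 1)) → ℝ}
    (hp : ∀ X : EuclideanSpace ℝ (Fin (n + 1)), p X = MvPolynomial.eval (fun i => X i) P)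
    (W : EuclideanSpace ℝ (Fin (n + 1)))
    (hW : ∀ j : ℕ, j < k → iteratedFDeriv ℝ j p W = 0)
    (X : EuclideanSpace ℝ (Fin (n + 1))) : p (X + W) = p X := by
  set q := MvPolynomial.eval₂ Polynomial.C
    (fun i => Polynomial.C (W i) + Polynomial.C (X i) * Polynomial.X) P with hqdef
  have hq : ∀ t : ℝ, q.eval t = p (W + t • X) := by
    intro t
    rw [hqdef, my_eval_eval₂, hp]
    have h1 : (fun i => Polynomial.eval t
        (Polynomial.C (W i) + Polynomial.C (X i) * Polynomial.X)) = fun i => (W + t • X) i := by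
      funext i
      simp only [Polynomial.eval_add, Polynomial.eval_C, Polynomial.eval_mul, Polynomial.eval_X,
        PiLp.add_apply, PiLp.smul_apply, smul_eq_mul]
      ring
    rw [h1]
  have hcont : ContDiff ℝ ⊤ p := by
    have h1 := my_contDiff_eval P
    have hpe : p = fun X : EuclideanSpace ℝ (Fin (n + 1)) =>
        MvPolynomial.eval (fun i => X i) P := funext hp
    rw [hpe]; exact h1
  -- all coefficients of q below degree k vanish
  have hcoeff : ∀ j, j < k → q.coeff j = 0 := by
    intro j hj
    have hc2 : ContDiff ℝ ⊤ (fun y : EuclideanSpace ℝ (Fin (n + 1)) => p (y + W)) :=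
      hcont.comp (contDiff_id.add contDiff_const)
    have h00 : iteratedFDeriv ℝ j (fun y : EuclideanSpace ℝ (Fin (n + 1)) => p (y + W))
        ((ContinuousLinearMap.toSpanSingleton ℝ X) 0) = 0 := by
      rw [my_iteratedFDeriv_comp_add]
      simp only [map_zero, zero_add]
      exact hW j hj
    have h0 : iteratedFDeriv ℝ j (fun t : ℝ => p (t • X + W)) 0 = 0 := by
      have h1 := ContinuousLinearMap.iteratedFDeriv_comp_right
        (ContinuousLinearMap.toSpanSingleton ℝ X) hc2 (0 : ℝ) (le_top : (j : WithTop ℕ∞) ≤ ⊤)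
      rw [h00] at h1
      have hfun : ((fun y : EuclideanSpace ℝ (Fin (n + 1)) => p (y + W)) ∘
          (ContinuousLinearMap.toSpanSingleton ℝ X)) = fun t : ℝ => p (t • X + W) := by
        funext t; simp [ContinuousLinearMap.toSpanSingleton_apply]
      rw [hfun] at h1
      rw [h1]; ext m; simp
    have hqe : (fun t : ℝ => q.eval t) = fun t : ℝ => p (t • X + W) := by
      funext t; rw [hq t, add_comm]
    have hd : iteratedDeriv j (fun t : ℝ => q.eval t) 0 = 0 := by
      rw [hqe, iteratedDeriv_eq_iteratedFDeriv, h0]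
      simp
    have hpoly : iteratedDeriv j (fun t : ℝ => q.eval t) 0
        = (Polynomial.derivative^[j] q).eval 0 := by
      rw [iteratedDeriv_eq_iterate, my_deriv_iterate]
    have hfac : (Polynomial.derivative^[j] q).eval 0 = (j.factorial : ℝ) * q.coeff j := by
      rw [← Polynomial.coeff_zero_eq_eval_zero, Polynomial.coeff_iterate_derivative]
      simp [Nat.descFactorial_self, nsmul_eq_mul]
    have hz : (j.factorial : ℝ) * q.coeff j = 0 := by rw [← hfac, ← hpoly, hd]
    have hfne : (j.factorial : ℝ) ≠ 0 := Nat.cast_ne_zero.mpr (Nat.factorial_ne_zero j)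
    exact (mul_eq_zero.mp hz).resolve_left hfne
  have hdeg : q.natDegree ≤ k := my_natDegree_le hP _ _
  have heval : ∀ t : ℝ, q.eval t = q.coeff k * t ^ k := by
    intro t
    rw [Polynomial.eval_eq_sum_range' (lt_of_le_of_lt hdeg (Nat.lt_succ_self k))]
    rw [Finset.sum_eq_single k]
    · intro b hb hbk
      have hbk' : b < k := lt_of_le_of_ne (Nat.lt_succ_iff.mp (Finset.mem_range.mp hb)) hbk
      rw [hcoeff b hbk', zero_mul]
    · intro h; exact absurd (Finset.self_mem_range_succ k) h
  have ha : p (W + X) = q.coeff k := by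
    have h1 := hq 1
    rw [heval 1, one_pow, mul_one, one_smul] at h1
    exact h1.symm
  have hscale : ∀ c : ℝ, c ≠ 0 → p (c • W + X) = q.coeff k := by
    intro c hc
    have ht : q.coeff k * c⁻¹ ^ k = p (W + c⁻¹ • X) := by rw [← hq, heval]
    have hh : p (W + c⁻¹ • X) = c⁻¹ ^ k * p (c • W + X) := by
      rw [hp, hp]
      have h1 : (fun i => (W + c⁻¹ • X) i) = fun i => c⁻¹ * ((c • W + X) i) := by
        funext i
        simp only [PiLp.add_apply, PiLp.smul_apply, smul_eq_mul]
        field_simp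
      rw [h1]
      exact my_eval_smul hP c⁻¹ _
    rw [hh, mul_comm] at ht
    exact (mul_left_cancel₀ (pow_ne_zero _ (inv_ne_zero hc)) ht).symm
  have hcont2 : Continuous (fun c : ℝ => p (c • W + X)) :=
    hcont.continuous.comp ((continuous_id.smul continuous_const).add continuous_const)
  have hdense : p ((0 : ℝ) • W + X) = q.coeff k := by
    have heqon : Set.EqOn (fun c : ℝ => p (c • W + X)) (fun _ => q.coeff k) {(0 : ℝ)}ᶜ :=
      fun c hc => hscale c hc
    have h1 := Continuous.ext_on (dense_compl_singleton (0 : ℝ)) hcont2 continuous_const heqon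
    exact congrFun h1 0
  rw [zero_smul, zero_add] at hdense
  rw [add_comm X W, ha, hdense]

lemma my_converse {n k : ℕ}
    {p : EuclideanSpace ℝ (Fin (n + 1)) → ℝ}
    {Z : EuclideanSpace ℝ (Fin (n + 1))}
    (hZ : ∀ j : ℕ, j < k → iteratedFDeriv ℝ j p Z = 0)
    (hTZ : ∀ X, p (X + Z) = p X)
    {W : EuclideanSpace ℝ (Fin (n + 1))}
    (hTW : ∀ X, p (X + W) = p X) :
    ∀ j : ℕ, j < k → iteratedFDeriv ℝ j p W = 0 := by
  intro j hj
  have e1 : (fun y => p (y + W)) = p := funext hTW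
  have e2 : (fun y => p (y + Z)) = p := funext hTZ
  have h1 : iteratedFDeriv ℝ j p 0 = iteratedFDeriv ℝ j p W := by
    have h := congrFun (my_iteratedFDeriv_comp_add p W j) 0
    rw [e1, zero_add] at h
    exact h
  have h2 : iteratedFDeriv ℝ j p 0 = iteratedFDeriv ℝ j p Z := by
    have h := congrFun (my_iteratedFDeriv_comp_add p Z j) 0
    rw [e2, zero_add] at h
    exact h
  rw [← h1, h2]
  exact hZ j hj

lemma my_smul {n : ℕ}
    {P : MvPolynomial (Fin (n + 1)) ℝ}
    {p : EuclideanSpace ℝ (Fin (n + 1)) → ℝ}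
    (hp : ∀ X : EuclideanSpace ℝ (Fin (n + 1)), p X = MvPolynomial.eval (fun i => X i) P)
    {W : EuclideanSpace ℝ (Fin (n + 1))}
    (hTW : ∀ X, p (X + W) = p X) (c : ℝ) :
    ∀ X, p (X + c • W) = p X := by
  intro X
  set q := MvPolynomial.eval₂ Polynomial.C
    (fun i => Polynomial.C (X i) + Polynomial.C (W i) * Polynomial.X) P - Polynomial.C (p X)
    with hqdef
  have hq : ∀ t : ℝ, q.eval t = p (X + t • W) - p X := by
    intro t
    rw [hqdef]
    simp only [Polynomial.eval_sub, Polynomial.eval_C]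
    rw [my_eval_eval₂, hp (X + t • W)]
    have h1 : (fun i => Polynomial.eval t
        (Polynomial.C (X i) + Polynomial.C (W i) * Polynomial.X)) = fun i => (X + t • W) i := by
      funext i
      simp only [Polynomial.eval_add, Polynomial.eval_C, Polynomial.eval_mul, Polynomial.eval_X,
        PiLp.add_apply, PiLp.smul_apply, smul_eq_mul]
      ring
    rw [h1]
  have hnat : ∀ m : ℕ, p (X + (m : ℝ) • W) = p X := by
    intro m
    induction m with
    | zero => simp
    | succ m IH =>
      have h1 : X + ((m + 1 : ℕ) : ℝ) • W = (X + (m : ℝ) • W) + W := by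
        push_cast
        rw [add_smul, one_smul, add_assoc]
      rw [h1, hTW, IH]
  have hq0 : q = 0 := by
    apply Polynomial.eq_zero_of_infinite_isRoot
    apply Set.infinite_of_injective_forall_mem (f := fun m : ℕ => (m : ℝ)) Nat.cast_injective
    intro m
    simp only [Set.mem_setOf_eq, Polynomial.IsRoot]
    rw [hq, hnat, sub_self]
  have h2 := hq c
  rw [hq0] at h2
  simp only [Polynomial.eval_zero] at h2
  linarith [h2.symm]

/-- If a homogeneous polynomial `p` of degree `k ≥ 2` on `ℝ^{n+1}` vanishes
to order `k` at `Z` (all derivatives of order `≤ k-1` vanish at `Z`), then `p` is invariant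
under translation by `Z`; moreover the set `Γ_k(p)` of such points is a vector subspace. -/
theorem homogeneous_polynomial_spine (n k : ℕ) (hk : 2 ≤ k)
    (P : MvPolynomial (Fin (n + 1)) ℝ) (hP : P.IsHomogeneous k)
    (p : EuclideanSpace ℝ (Fin (n + 1)) → ℝ)
    (hp : ∀ X : EuclideanSpace ℝ (Fin (n + 1)), p X = MvPolynomial.eval (fun i => X i) P)
    (Z : EuclideanSpace ℝ (Fin (n + 1)))
    (hZ : ∀ j : ℕ, j ≤ k - 1 → iteratedFDeriv ℝ j p Z = 0) :
    (∀ X : EuclideanSpace ℝ (Fin (n + 1)), p (X + Z) = p X) ∧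
    ∃ V : Submodule ℝ (EuclideanSpace ℝ (Fin (n + 1))),
      (V : Set (EuclideanSpace ℝ (Fin (n + 1)))) =
        {W : EuclideanSpace ℝ (Fin (n + 1)) |
          ∀ j : ℕ, j ≤ k - 1 → iteratedFDeriv ℝ j p W = 0} := by
  have hZ' : ∀ j : ℕ, j < k → iteratedFDeriv ℝ j p Z = 0 := fun j hj => hZ j (by omega)
  have hTZ : ∀ X, p (X + Z) = p X := my_key hP hp Z hZ'
  refine ⟨hTZ, ?_⟩
  have h0 : ∀ j : ℕ, j ≤ k - 1 →
      iteratedFDeriv ℝ j p (0 : EuclideanSpace ℝ (Fin (n + 1))) = 0 := by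
    intro j hj
    exact my_converse hZ' hTZ (W := (0 : EuclideanSpace ℝ (Fin (n + 1))))
      (fun X => by simp) j (by omega)
  have hadd : ∀ a b : EuclideanSpace ℝ (Fin (n + 1)),
      (∀ j : ℕ, j ≤ k - 1 → iteratedFDeriv ℝ j p a = 0) →
      (∀ j : ℕ, j ≤ k - 1 → iteratedFDeriv ℝ j p b = 0) →
      ∀ j : ℕ, j ≤ k - 1 → iteratedFDeriv ℝ j p (a + b) = 0 := by
    intro a b ha hb j hj
    have hTa : ∀ X, p (X + a) = p X := my_key hP hp a (fun j hj => ha j (by omega))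
    have hTb : ∀ X, p (X + b) = p X := my_key hP hp b (fun j hj => hb j (by omega))
    exact my_converse hZ' hTZ (W := a + b)
      (fun X => by rw [← add_assoc, hTb, hTa]) j (by omega)
  have hsmul : ∀ (c : ℝ) (a : EuclideanSpace ℝ (Fin (n + 1))),
      (∀ j : ℕ, j ≤ k - 1 → iteratedFDeriv ℝ j p a = 0) →
      ∀ j : ℕ, j ≤ k - 1 → iteratedFDeriv ℝ j p (c • a) = 0 := by
    intro c a ha j hj
    have hTa : ∀ X, p (X + a) = p X := my_key hP hp a (fun j hj => ha j (by omega))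
    exact my_converse hZ' hTZ (W := c • a) (my_smul hp hTa c) j (by omega)
  refine ⟨{ carrier := {W : EuclideanSpace ℝ (Fin (n + 1)) | ∀ j : ℕ, j ≤ k - 1 → iteratedFDeriv ℝ j p W = 0}, zero_mem' := h0, add_mem' := fun {a b} ha hb => hadd a b ha hb, smul_mem' := fun c a ha => hsmul c a ha }, rfl⟩
end

section
/- Let u : B₁ ⊂ ℝ^{n+1} → ℝ be continuous with u(X₀) = 0 at X₀ ∈ Σ ∩ B₁. Suppose for some k ≥ 1 there exist constants c, C > 0 and R > 0 such that c r^k ≤ sup_{∂B_r(X₀)} |u| ≤ C r^k for all 0 < r < R (nondegeneracy and growth at order k). If additionally the rescalings u_r(X) = u(X₀+rX)/r^k converge uniformly on compact sets along every sequence r_j → 0 to limits in a fixed finite-dimensional space P of k-homogeneous polynomials, and any two subsequential limits p, q ∈ P that agree on ∂B₁ in the L²(|y|^a dσ)-sense must coincide, and moreover the Monneau monotonicity holds (r ↦ r^{-(n+a+2k)}∫_{∂B_r(X₀)}|y|^a(u−p_{X₀})²dσ is nondecreasing for each p ∈ P), then the blow-up limit is unique: there exists exactly one nonzero p ∈ P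 with u(X₀+rX)/r^k → p(X) uniformly on compact sets as r → 0. -/
open MeasureTheory Metric Set Filter
open scoped RealInnerProductSpace Topology ENNReal

noncomputable section

/-- Surface measure on the unit sphere of `ℝ^{n+1}`, obtained from Lebesgue measure. -/
def sphereMeasure (n : ℕ) :
    Measure (Metric.sphere (0 : EuclideanSpace ℝ (Fin (n + 1))) 1) :=
  (volume : Measure (EuclideanSpace ℝ (Fin (n + 1)))).toSphere

/-- Surface integral of `f` over the sphere `∂B_r(X₀)` (with the Jacobian factor `r^n`). -/
def sphInt (n : ℕ) (f : EuclideanSpace ℝ (Fin (n + 1)) → ℝ)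
    (X₀ : EuclideanSpace ℝ (Fin (n + 1))) (r : ℝ) : ℝ :=
  r ^ n * ∫ ω, f (X₀ + r • (ω : EuclideanSpace ℝ (Fin (n + 1)))) ∂(sphereMeasure n)

namespace BlowupAux

abbrev Euc (n : ℕ) : Type := EuclideanSpace ℝ (Fin (n + 1))

lemma continuous_coord (n : ℕ) (i : Fin (n + 1)) :
    Continuous fun x : Euc n => x i :=
  (EuclideanSpace.proj (𝕜 := ℝ) i).continuous

lemma measurable_coord (n : ℕ) (i : Fin (n + 1)) :
    Measurable fun x : Euc n => x i :=
  (continuous_coord n i).measurable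

lemma abs_apply_le_norm {n : ℕ} (x : Euc n) (i : Fin (n + 1)) : |x i| ≤ ‖x‖ := by
  rw [EuclideanSpace.norm_eq x, ← Real.sqrt_sq_eq_abs]
  apply Real.sqrt_le_sqrt
  have : |x i| ^ 2 ≤ ∑ j, ‖x j‖ ^ 2 := by
    have := Finset.single_le_sum (f := fun j => ‖x j‖ ^ 2)
      (fun j _ => sq_nonneg _) (Finset.mem_univ i)
    simpa [Real.norm_eq_abs, sq_abs] using this
  simpa [sq_abs] using this

/-- `|t|^a` is integrable on `(-2,2)` for `a > -1`. -/
lemma oneDimInt {a : ℝ} (ha : (-1 : ℝ) < a) :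
    IntegrableOn (fun t : ℝ => |t| ^ a) (Set.Ioo (-2 : ℝ) 2) volume := by
  have hpos : IntegrableOn (fun t : ℝ => |t| ^ a) (Set.Ioc (0 : ℝ) 2) volume := by
    have h := (intervalIntegral.intervalIntegrable_rpow' (a := 0) (b := 2) ha)
    rw [intervalIntegrable_iff_integrableOn_Ioc_of_le (by norm_num)] at h
    exact h.congr_fun (fun t ht => by rw [abs_of_pos ht.1]) measurableSet_Ioc
  have habs : IntervalIntegrable (fun t : ℝ => |t| ^ a) volume 0 2 := by
    rw [intervalIntegrable_iff_integrableOn_Ioc_of_le (by norm_num)]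
    exact hpos
  have hneg : IntegrableOn (fun t : ℝ => |t| ^ a) (Set.Ioc (-2 : ℝ) 0) volume := by
    have h2 := (IntervalIntegrable.iff_comp_neg (f := fun t : ℝ => |t| ^ a) (a := 0) (b := 2)
      enorm_ne_top).mp habs
    simp only [abs_neg, neg_zero] at h2
    have h3 := h2.symm
    rw [intervalIntegrable_iff_integrableOn_Ioc_of_le (by norm_num)] at h3
    exact h3
  refine (hneg.union hpos).mono_set ?_
  intro t ht
  rcases le_or_gt t 0 with h | h
  · exact Or.inl ⟨ht.1, h⟩
  · exact Or.inr ⟨h, ht.2.le⟩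

/-- The weight `|ω_y|^a` is integrable on the unit sphere for `a ∈ (-1,1)`. -/
lemma weightInt (n : ℕ) {a : ℝ} (ha : a ∈ Set.Ioo (-1 : ℝ) 1) :
    Integrable (fun ω : Metric.sphere (0 : Euc n) 1 =>
      |(ω : Euc n) (Fin.last n)| ^ a) (sphereMeasure n) := by
  classical
  obtain ⟨ha1, _ha2⟩ := ha
  have mcoord : Measurable fun x : Euc n => x (Fin.last n) := measurable_coord n _
  have habs : Measurable fun t : ℝ => |t| := continuous_abs.measurable
  -- Step 1 : integrability on a ball in `Euc n`
  have hball : IntegrableOn (fun x : Euc n => |x (Fin.last n)| ^ a)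
      (Metric.ball (0 : Euc n) 2) volume := by
    set g : Fin (n + 1) → ℝ → ℝ := fun i =>
      if i = Fin.last n then (Set.Ioo (-2 : ℝ) 2).indicator (fun t => |t| ^ a)
      else (Set.Ioo (-2 : ℝ) 2).indicator (fun _ => (1 : ℝ)) with hgdef
    have hgint : ∀ i, Integrable (g i) volume := by
      intro i
      by_cases hi : i = Fin.last n
      · rw [hgdef]; simp only [if_pos hi]
        rw [integrable_indicator_iff measurableSet_Ioo]
        exact oneDimInt ha1
      · rw [hgdef]; simp only [if_neg hi]
        rw [integrable_indicator_iff measurableSet_Ioo]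
        refine integrableOn_const (ne_of_lt ?_)
        rw [Real.volume_Ioo]; exact ENNReal.ofReal_lt_top
    have hpi : Integrable (fun x : Fin (n + 1) → ℝ => ∏ i, g i (x i)) volume :=
      Integrable.fintype_prod (𝕜 := ℝ) hgint
    have hE : Integrable (fun x : Euc n => ∏ i, g i (x i)) volume := by
      have hcomp := (EuclideanSpace.volume_preserving_symm_measurableEquiv_toLp
        (Fin (n + 1))).integrable_comp_emb
        (MeasurableEquiv.toLp 2 (Fin (n + 1) → ℝ)).symm.measurableEmbedding
        (g := fun x : Fin (n + 1) → ℝ => ∏ i, g i (x i))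
      exact hcomp.2 hpi
    have hmeas : AEStronglyMeasurable (fun x : Euc n => |x (Fin.last n)| ^ a)
        (volume.restrict (Metric.ball (0 : Euc n) 2)) :=
      (((habs.comp mcoord).pow measurable_const)).aestronglyMeasurable
    refine (hE.integrableOn).mono' hmeas ?_
    rw [ae_restrict_iff' measurableSet_ball]
    refine Eventually.of_forall fun x hx => ?_
    have hco : ∀ i, x i ∈ Set.Ioo (-2 : ℝ) 2 := by
      intro i
      have h1 := abs_apply_le_norm x i
      have hn : ‖x‖ < 2 := mem_ball_zero_iff.mp hx
      have := abs_lt.mp (lt_of_le_of_lt h1 hn)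
      exact ⟨this.1, this.2⟩
    have hprod : ∏ i, g i (x i) = |x (Fin.last n)| ^ a := by
      rw [Finset.prod_eq_single (Fin.last n)]
      · simp [hgdef, Set.indicator_of_mem (hco (Fin.last n))]
      · intro b _ hb
        simp [hgdef, hb, Set.indicator_of_mem (hco b)]
      · intro h; exact absurd (Finset.mem_univ _) h
    rw [hprod, Real.norm_eq_abs, abs_of_nonneg (Real.rpow_nonneg (abs_nonneg _) _)]
  -- Step 2 : the polar-coordinate integrand on `Euc n`
  set F : Euc n → ℝ := fun x => |(‖x‖⁻¹ • x) (Fin.last n)| ^ a *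
    (Set.Ioo (1 : ℝ) 2).indicator (fun _ => (1 : ℝ)) ‖x‖ with hFdef
  have hFmeas : Measurable F := by
    have m1 : Measurable fun x : Euc n => ‖x‖⁻¹ • x := by
      have hc : Continuous fun p : ℝ × Euc n => p.1 • p.2 := continuous_smul
      exact hc.measurable.comp ((measurable_norm.inv).prodMk measurable_id)
    refine Measurable.mul ?_ ?_
    · exact ((habs.comp ((measurable_coord n (Fin.last n)).comp m1)).pow measurable_const)
    · exact (Measurable.indicator measurable_const measurableSet_Ioo).comp measurable_norm
  have hFbound : ∀ x : Euc n, ‖F x‖ ≤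
      (Metric.ball (0 : Euc n) 2).indicator
        (fun y => (2 : ℝ) ^ |a| * |y (Fin.last n)| ^ a) x := by
    intro x
    have hDnn : 0 ≤ (Metric.ball (0 : Euc n) 2).indicator
        (fun y => (2 : ℝ) ^ |a| * |y (Fin.last n)| ^ a) x :=
      Set.indicator_nonneg (fun y _ =>
        mul_nonneg (Real.rpow_nonneg (by norm_num) _) (Real.rpow_nonneg (abs_nonneg _) _)) x
    by_cases hx : ‖x‖ ∈ Set.Ioo (1 : ℝ) 2
    · have hx2 : x ∈ Metric.ball (0 : Euc n) 2 := mem_ball_zero_iff.2 hx.2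
      rw [Set.indicator_of_mem hx2, hFdef]
      simp only [Set.indicator_of_mem hx, mul_one]
      rw [Real.norm_eq_abs, abs_of_nonneg (Real.rpow_nonneg (abs_nonneg _) _)]
      have h0x : (0 : ℝ) < ‖x‖ := lt_trans one_pos hx.1
      have hsm : (‖x‖⁻¹ • x) (Fin.last n) = ‖x‖⁻¹ * x (Fin.last n) := rfl
      rw [hsm, abs_mul, abs_inv, abs_norm,
        Real.mul_rpow (inv_nonneg.2 (norm_nonneg _)) (abs_nonneg _)]
      have hkey : (‖x‖⁻¹) ^ a ≤ (2 : ℝ) ^ |a| := by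
        rcases le_or_gt 0 a with hA | hA
        · have h1 : (‖x‖⁻¹ : ℝ) ≤ 1 := by
            rw [inv_le_one_iff₀]; right; exact hx.1.le
          have h2 : (‖x‖⁻¹ : ℝ) ^ a ≤ 1 :=
            Real.rpow_le_one (inv_nonneg.2 (norm_nonneg _)) h1 hA
          have h3 : (1 : ℝ) ≤ 2 ^ |a| := by
            have := Real.rpow_le_rpow_of_exponent_le (x := 2) one_le_two (abs_nonneg a)
            rwa [Real.rpow_zero] at this
          linarith
        · have h1 : (2⁻¹ : ℝ) ≤ ‖x‖⁻¹ := by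
            apply inv_anti₀ h0x hx.2.le
          have h2 := Real.rpow_le_rpow_of_nonpos (by norm_num : (0 : ℝ) < 2⁻¹) h1 hA.le
          have h3 : ((2 : ℝ)⁻¹) ^ a = 2 ^ |a| := by
            rw [abs_of_neg hA, Real.inv_rpow (by norm_num : (0 : ℝ) ≤ 2),
              ← Real.rpow_neg (by norm_num : (0 : ℝ) ≤ 2)]
          rw [h3] at h2; exact h2
      exact mul_le_mul_of_nonneg_right hkey (Real.rpow_nonneg (abs_nonneg _) _)
    · rw [hFdef]
      simp only [Set.indicator_of_notMem hx, mul_zero, norm_zero]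
      exact hDnn
  have hFint : Integrable F volume := by
    have hD : Integrable ((Metric.ball (0 : Euc n) 2).indicator
        (fun y => (2 : ℝ) ^ |a| * |y (Fin.last n)| ^ a)) volume := by
      rw [integrable_indicator_iff measurableSet_ball]
      exact hball.const_mul _
    exact hD.mono' hFmeas.aestronglyMeasurable (Eventually.of_forall hFbound)
  -- Step 3 : integrability for the comap measure on `{0}ᶜ`
  have hmeas0 : MeasurableSet ({0}ᶜ : Set (Euc n)) := (measurableSet_singleton 0).compl
  have hcomap : Integrable (fun x : ({0}ᶜ : Set (Euc n)) => F x.val)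
      (volume.comap Subtype.val) := by
    have h1 : Integrable F (Measure.map Subtype.val
        (volume.comap (Subtype.val : ({0}ᶜ : Set (Euc n)) → Euc n))) := by
      rw [map_comap_subtype_coe hmeas0]
      exact hFint.restrict
    exact (MeasurableEmbedding.subtype_coe hmeas0).integrable_map_iff.1 h1
  -- Step 4 : transfer to the product measure via polar coordinates
  set T : Metric.sphere (0 : Euc n) 1 × Set.Ioi (0 : ℝ) → ℝ := fun z =>
    |(z.1 : Euc n) (Fin.last n)| ^ a *
      (Set.Ioo (1 : ℝ) 2).indicator (fun _ => (1 : ℝ)) z.2.val with hTdef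
  have hTprod : Integrable T ((sphereMeasure n).prod (Measure.volumeIoiPow n)) := by
    have hpres := (volume : Measure (Euc n)).measurePreserving_homeomorphUnitSphereProd
    have hdim : Module.finrank ℝ (Euc n) - 1 = n := by
      rw [finrank_euclideanSpace_fin]
      omega
    simp only [hdim] at hpres
    have hiff := hpres.integrable_comp_emb
      (Homeomorph.measurableEmbedding (homeomorphUnitSphereProd (Euc n))) (g := T)
    have hcompF : (T ∘ (homeomorphUnitSphereProd (Euc n)))
        = fun x : ({0}ᶜ : Set (Euc n)) => F x.val := by
      funext x
      simp only [Function.comp_apply, hTdef, hFdef,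
        homeomorphUnitSphereProd_apply_fst_coe, homeomorphUnitSphereProd_apply_snd_coe]
    have : Integrable (T ∘ (homeomorphUnitSphereProd (Euc n))) (volume.comap Subtype.val) := by
      rw [hcompF]; exact hcomap
    have := hiff.1 this
    simpa [sphereMeasure] using this
  -- Step 5 : integrate out the radial variable
  have hmarg := hTprod.integral_prod_left
  set S : Set (Set.Ioi (0 : ℝ)) := Subtype.val ⁻¹' (Set.Ioo (1 : ℝ) 2) with hSdef
  have hSm : MeasurableSet S := measurable_subtype_coe measurableSet_Ioo
  have hcm : (volume.comap (Subtype.val : Set.Ioi (0 : ℝ) → ℝ)) S = 1 := by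
    rw [comap_subtype_coe_apply measurableSet_Ioi]
    have himg : (Subtype.val : Set.Ioi (0 : ℝ) → ℝ) '' S = Set.Ioo (1 : ℝ) 2 := by
      rw [hSdef, Subtype.image_preimage_coe]
      exact Set.inter_eq_right.2 (fun t ht => lt_trans one_pos ht.1)
    rw [himg, Real.volume_Ioo]; norm_num
  have hlow : (1 : ENNReal) ≤ (Measure.volumeIoiPow n) S := by
    calc (1 : ENNReal) = (volume.comap Subtype.val) S := hcm.symm
      _ = ∫⁻ _ in S, 1 ∂(volume.comap Subtype.val) := (setLIntegral_one S).symm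
      _ ≤ ∫⁻ r in S, ENNReal.ofReal (r.val ^ n) ∂(volume.comap Subtype.val) := by
          refine setLIntegral_mono' hSm (fun r hr => ?_)
          have h1 : (1 : ℝ) ≤ r.val ^ n := one_le_pow₀ (le_of_lt hr.1)
          simpa using ENNReal.one_le_ofReal.2 h1
      _ = (Measure.volumeIoiPow n) S := by
          rw [Measure.volumeIoiPow, withDensity_apply _ hSm]
  have hup : (Measure.volumeIoiPow n) S ≤ ENNReal.ofReal ((2 : ℝ) ^ n) := by
    rw [Measure.volumeIoiPow, withDensity_apply _ hSm]
    calc ∫⁻ r in S, ENNReal.ofReal (r.val ^ n) ∂(volume.comap Subtype.val)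
        ≤ ∫⁻ _ in S, ENNReal.ofReal ((2 : ℝ) ^ n) ∂(volume.comap Subtype.val) := by
          refine setLIntegral_mono' hSm (fun r hr => ?_)
          refine ENNReal.ofReal_le_ofReal (pow_le_pow_left₀ ?_ hr.2.le n)
          exact le_trans zero_le_one hr.1.le
      _ = ENNReal.ofReal ((2 : ℝ) ^ n) * (volume.comap Subtype.val) S :=
          setLIntegral_const _ _
      _ = ENNReal.ofReal ((2 : ℝ) ^ n) := by rw [hcm, mul_one]
  have hκne : ((Measure.volumeIoiPow n) S).toReal ≠ 0 := by
    have h1 : (Measure.volumeIoiPow n) S ≠ 0 := by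
      intro h; rw [h] at hlow; simp at hlow
    have h2 : (Measure.volumeIoiPow n) S ≠ ⊤ :=
      ne_top_of_le_ne_top ENNReal.ofReal_ne_top hup
    exact (ENNReal.toReal_pos h1 h2).ne'
  have hind : ∀ r : Set.Ioi (0 : ℝ),
      (Set.Ioo (1 : ℝ) 2).indicator (fun _ => (1 : ℝ)) r.val
        = S.indicator (fun _ => (1 : ℝ)) r := by
    intro r
    by_cases h : r.val ∈ Set.Ioo (1 : ℝ) 2
    · rw [Set.indicator_of_mem h, Set.indicator_of_mem (show r ∈ S from h)]
    · rw [Set.indicator_of_notMem h, Set.indicator_of_notMem (show r ∉ S from h)]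
  have hfin : Integrable (fun ω : Metric.sphere (0 : Euc n) 1 =>
      |(ω : Euc n) (Fin.last n)| ^ a * ((Measure.volumeIoiPow n) S).toReal)
      (sphereMeasure n) := by
    have heq : (fun ω : Metric.sphere (0 : Euc n) 1 =>
        ∫ r, T (ω, r) ∂(Measure.volumeIoiPow n))
        = fun ω : Metric.sphere (0 : Euc n) 1 =>
            |(ω : Euc n) (Fin.last n)| ^ a * ((Measure.volumeIoiPow n) S).toReal := by
      funext ω
      rw [hTdef]
      simp only
      rw [integral_const_mul]
      congr 1
      calc ∫ r : Set.Ioi (0 : ℝ), (Set.Ioo (1 : ℝ) 2).indicator (fun _ => (1 : ℝ)) r.val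
            ∂(Measure.volumeIoiPow n)
          = ∫ r : Set.Ioi (0 : ℝ), S.indicator (fun _ => (1 : ℝ)) r
            ∂(Measure.volumeIoiPow n) := by
            refine integral_congr_ae (Eventually.of_forall fun r => hind r)
        _ = ((Measure.volumeIoiPow n) S).toReal := by
            rw [integral_indicator_const (1 : ℝ) hSm, smul_eq_mul, mul_one]; rfl
    rw [← heq]
    exact hmarg
  have := hfin.mul_const (((Measure.volumeIoiPow n) S).toReal)⁻¹
  simpa [mul_assoc, mul_inv_cancel₀ hκne] using this

/-- Real-analysis helper: bounded sup over a set. -/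
lemma biSup_le_of {α : Type*} {S : Set α} {f : α → ℝ} {B : ℝ} (h0 : 0 ≤ B)
    (h : ∀ x ∈ S, f x ≤ B) : (⨆ x ∈ S, f x) ≤ B :=
  Real.iSup_le (fun x => Real.iSup_le (fun hx => h x hx) h0) h0

lemma le_biSup_of {α : Type*} {S : Set α} {f : α → ℝ} {B : ℝ}
    (h : ∀ x ∈ S, f x ≤ B) {x : α} (hx : x ∈ S) : f x ≤ ⨆ y ∈ S, f y := by
  have h1 : ∀ y, (⨆ _ : y ∈ S, f y) ≤ max B 0 :=
    fun y => Real.iSup_le (fun hy => (h y hy).trans (le_max_left _ _)) (le_max_right _ _)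
  have hbdd : BddAbove (Set.range fun y => ⨆ _ : y ∈ S, f y) := by
    refine ⟨max B 0, ?_⟩
    rintro z ⟨y, rfl⟩
    exact h1 y
  calc f x = ⨆ _ : x ∈ S, f x := by rw [ciSup_pos hx]
    _ ≤ ⨆ y ∈ S, f y := le_ciSup hbdd x

/-- Rescaling identity for the Monneau quotient. -/
lemma monneau_eq (n : ℕ) (a k : ℝ) (X₀ : Euc n) (hX₀ : X₀ (Fin.last n) = 0)
    (u p : Euc n → ℝ)
    (hhom : ∀ lam : ℝ, 0 < lam → ∀ X : Euc n, p (lam • X) = lam ^ k * p X)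
    {r : ℝ} (hr : 0 < r) :
    r ^ (-((n : ℝ) + a + 2 * k)) *
        sphInt n (fun X => |X (Fin.last n)| ^ a * (u X - p (X - X₀)) ^ 2) X₀ r
      = ∫ ω, |(ω : Euc n) (Fin.last n)| ^ a *
          (u (X₀ + r • (ω : Euc n)) / r ^ k - p (ω : Euc n)) ^ 2 ∂(sphereMeasure n) := by
  have hrk : (0 : ℝ) < r ^ k := Real.rpow_pos_of_pos hr k
  have key : ∀ ω : Metric.sphere (0 : Euc n) 1,
      |(X₀ + r • (ω : Euc n)) (Fin.last n)| ^ a *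
        (u (X₀ + r • (ω : Euc n)) - p (X₀ + r • (ω : Euc n) - X₀)) ^ 2
      = (r ^ a * (r ^ k) ^ 2) * (|(ω : Euc n) (Fin.last n)| ^ a *
        (u (X₀ + r • (ω : Euc n)) / r ^ k - p (ω : Euc n)) ^ 2) := by
    intro ω
    have h1 : (X₀ + r • (ω : Euc n)) (Fin.last n) = r * (ω : Euc n) (Fin.last n) := by
      simp [PiLp.add_apply, PiLp.smul_apply, hX₀, smul_eq_mul]
    have h2 : |r * (ω : Euc n) (Fin.last n)| ^ a = r ^ a * |(ω : Euc n) (Fin.last n)| ^ a := by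
      rw [abs_mul, abs_of_pos hr, Real.mul_rpow hr.le (abs_nonneg _)]
    have h3 : X₀ + r • (ω : Euc n) - X₀ = r • (ω : Euc n) := add_sub_cancel_left _ _
    have h4 : p (r • (ω : Euc n)) = r ^ k * p (ω : Euc n) := hhom r hr _
    have h5 : u (X₀ + r • (ω : Euc n)) - r ^ k * p (ω : Euc n)
        = r ^ k * (u (X₀ + r • (ω : Euc n)) / r ^ k - p (ω : Euc n)) := by
      field_simp
    rw [h1, h2, h3, h4, h5]
    ring
  unfold sphInt
  have heq : (fun ω : Metric.sphere (0 : Euc n) 1 =>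
      |(X₀ + r • (ω : Euc n)) (Fin.last n)| ^ a *
        (u (X₀ + r • (ω : Euc n)) - p (X₀ + r • (ω : Euc n) - X₀)) ^ 2)
      = fun ω : Metric.sphere (0 : Euc n) 1 => (r ^ a * (r ^ k) ^ 2) *
        (|(ω : Euc n) (Fin.last n)| ^ a *
          (u (X₀ + r • (ω : Euc n)) / r ^ k - p (ω : Euc n)) ^ 2) := funext key
  rw [heq, integral_const_mul]
  have hcoef : r ^ (-((n : ℝ) + a + 2 * k)) * ((r : ℝ) ^ (n : ℕ) * (r ^ a * (r ^ k) ^ 2)) = 1 := by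
    rw [← Real.rpow_natCast r n, sq, ← Real.rpow_add hr, ← Real.rpow_add hr,
      ← Real.rpow_add hr, ← Real.rpow_add hr]
    rw [show -((n : ℝ) + a + 2 * k) + ((n : ℝ) + (a + (k + k))) = 0 by ring, Real.rpow_zero]
  calc r ^ (-((n : ℝ) + a + 2 * k)) * ((r : ℝ) ^ (n : ℕ) * ((r ^ a * (r ^ k) ^ 2) *
        ∫ ω, |(ω : Euc n) (Fin.last n)| ^ a *
          (u (X₀ + r • (ω : Euc n)) / r ^ k - p (ω : Euc n)) ^ 2 ∂(sphereMeasure n)))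
      = (r ^ (-((n : ℝ) + a + 2 * k)) * ((r : ℝ) ^ (n : ℕ) * (r ^ a * (r ^ k) ^ 2))) *
        ∫ ω, |(ω : Euc n) (Fin.last n)| ^ a *
          (u (X₀ + r • (ω : Euc n)) / r ^ k - p (ω : Euc n)) ^ 2 ∂(sphereMeasure n) := by
        ring
    _ = _ := by rw [hcoef, one_mul]

/-- Dominated convergence for the spherical `L²(|y|^a)` quantities. -/
lemma dct (n : ℕ) {a k R C : ℝ} (ha : a ∈ Set.Ioo (-1 : ℝ) 1) (hC : 0 < C)
    (X₀ : Euc n) (u : Euc n → ℝ)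
    (hu : ContinuousOn u (Metric.ball X₀ R))
    (hbound : ∀ r ∈ Set.Ioo (0 : ℝ) R, ∀ X ∈ Metric.sphere X₀ r, |u X| ≤ C * r ^ k)
    (p q : Euc n → ℝ) (hp : Continuous p)
    (s : ℕ → ℝ) (hs : ∀ j, s j ∈ Set.Ioo (0 : ℝ) R)
    (hconv : TendstoUniformlyOn (fun j X => u (X₀ + s j • X) / s j ^ k) q atTop
      (Metric.sphere (0 : Euc n) 1)) :
    Tendsto (fun j => ∫ ω, |(ω : Euc n) (Fin.last n)| ^ a *
        (u (X₀ + s j • (ω : Euc n)) / s j ^ k - p (ω : Euc n)) ^ 2 ∂(sphereMeasure n))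
      atTop (𝓝 (∫ ω, |(ω : Euc n) (Fin.last n)| ^ a *
        (q (ω : Euc n) - p (ω : Euc n)) ^ 2 ∂(sphereMeasure n))) := by
  obtain ⟨Bp, hBp⟩ := (isCompact_sphere (0 : Euc n) 1).exists_bound_of_continuousOn
    hp.continuousOn
  set Bp' : ℝ := max Bp 0 with hBp'def
  have hBp'0 : 0 ≤ Bp' := le_max_right _ _
  have hw_nonneg : ∀ ω : Metric.sphere (0 : Euc n) 1,
      0 ≤ |(ω : Euc n) (Fin.last n)| ^ a := fun ω => Real.rpow_nonneg (abs_nonneg _) a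
  have hw_meas : Measurable fun ω : Metric.sphere (0 : Euc n) 1 =>
      |(ω : Euc n) (Fin.last n)| ^ a := by
    have h1 : Measurable fun ω : Metric.sphere (0 : Euc n) 1 => (ω : Euc n) (Fin.last n) :=
      (measurable_coord n (Fin.last n)).comp measurable_subtype_coe
    exact ((continuous_abs.measurable.comp h1).pow measurable_const)
  have hmem : ∀ (j : ℕ) (ω : Metric.sphere (0 : Euc n) 1),
      X₀ + s j • (ω : Euc n) ∈ Metric.sphere X₀ (s j) := by
    intro j ω
    have hv : ‖(ω : Euc n)‖ = 1 := mem_sphere_zero_iff_norm.mp ω.2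
    rw [mem_sphere, dist_eq_norm, add_sub_cancel_left, norm_smul, Real.norm_eq_abs,
      abs_of_pos (hs j).1, hv, mul_one]
  have hball : ∀ (j : ℕ) (ω : Metric.sphere (0 : Euc n) 1),
      X₀ + s j • (ω : Euc n) ∈ Metric.ball X₀ R := by
    intro j ω
    have := hmem j ω
    rw [mem_sphere] at this
    rw [mem_ball, this]
    exact (hs j).2
  have husb : ∀ (j : ℕ) (ω : Metric.sphere (0 : Euc n) 1),
      |u (X₀ + s j • (ω : Euc n)) / s j ^ k| ≤ C := by
    intro j ω
    have hrk : (0 : ℝ) < s j ^ k := Real.rpow_pos_of_pos (hs j).1 k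
    rw [abs_div, abs_of_pos hrk, div_le_iff₀ hrk]
    exact hbound (s j) (hs j) _ (hmem j ω)
  apply tendsto_integral_of_dominated_convergence
    (bound := fun ω : Metric.sphere (0 : Euc n) 1 =>
      |(ω : Euc n) (Fin.last n)| ^ a * (C + Bp') ^ 2)
  · intro j
    have hcontj : Continuous fun ω : Metric.sphere (0 : Euc n) 1 =>
        u (X₀ + s j • (ω : Euc n)) := by
      refine hu.comp_continuous ?_ (hball j)
      fun_prop
    have hc2 : Continuous fun ω : Metric.sphere (0 : Euc n) 1 =>
        (u (X₀ + s j • (ω : Euc n)) / s j ^ k - p (ω : Euc n)) ^ 2 :=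
      ((hcontj.div_const _).sub (hp.comp continuous_subtype_val)).pow 2
    exact (hw_meas.mul hc2.measurable).aestronglyMeasurable
  · exact (weightInt n ha).mul_const _
  · intro j
    refine Eventually.of_forall fun ω => ?_
    have h2 : |p (ω : Euc n)| ≤ Bp' := by
      have := hBp _ ω.2
      rw [Real.norm_eq_abs] at this
      exact this.trans (le_max_left _ _)
    have hd : |u (X₀ + s j • (ω : Euc n)) / s j ^ k - p (ω : Euc n)| ≤ C + Bp' := by
      calc |u (X₀ + s j • (ω : Euc n)) / s j ^ k - p (ω : Euc n)|
          ≤ |u (X₀ + s j • (ω : Euc n)) / s j ^ k| + |p (ω : Euc n)| := abs_sub _ _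
        _ ≤ C + Bp' := add_le_add (husb j ω) h2
    have hsq : (u (X₀ + s j • (ω : Euc n)) / s j ^ k - p (ω : Euc n)) ^ 2 ≤ (C + Bp') ^ 2 := by
      rw [← sq_abs]
      exact pow_le_pow_left₀ (abs_nonneg _) hd 2
    rw [Real.norm_eq_abs, abs_of_nonneg (mul_nonneg (hw_nonneg ω) (sq_nonneg _))]
    exact mul_le_mul_of_nonneg_left hsq (hw_nonneg ω)
  · refine Eventually.of_forall fun ω => ?_
    have h1 := hconv.tendsto_at ω.2
    exact (((h1.sub tendsto_const_nhds).pow 2).const_mul _)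

end BlowupAux

open BlowupAux

/-- Uniqueness of the blow-up limit: under nondegeneracy and growth of
order `k` at `X₀ ∈ Σ`, compactness of rescalings along sequences with subsequential limits in
a fixed finite-dimensional space `P` of `k`-homogeneous polynomials, an `L²(|y|^a dσ)`
separation property on `∂B₁`, and Monneau monotonicity, there is exactly one nonzero
`p ∈ P` with `u(X₀ + rX)/r^k → p(X)` locally uniformly as `r → 0⁺`. -/
theorem uniqueness_of_blowup (n : ℕ) (a k R c C : ℝ)
    (ha : a ∈ Set.Ioo (-1 : ℝ) 1) (hk : 1 ≤ k) (hR : 0 < R) (hc : 0 < c) (hC : 0 < C)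
    (X₀ : EuclideanSpace ℝ (Fin (n + 1))) (hX₀ : X₀ (Fin.last n) = 0)
    (u : EuclideanSpace ℝ (Fin (n + 1)) → ℝ)
    (hu : ContinuousOn u (Metric.ball X₀ R)) (hzero : u X₀ = 0)
    (hgrowth : ∀ r ∈ Set.Ioo (0 : ℝ) R,
      c * r ^ k ≤ (⨆ X ∈ Metric.sphere X₀ r, |u X|) ∧
      (⨆ X ∈ Metric.sphere X₀ r, |u X|) ≤ C * r ^ k)
    (P : Submodule ℝ (EuclideanSpace ℝ (Fin (n + 1)) → ℝ))
    (hPfd : FiniteDimensional ℝ P)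
    (hPhom : ∀ p ∈ P, ∀ lam : ℝ, 0 < lam → ∀ X : EuclideanSpace ℝ (Fin (n + 1)),
      p (lam • X) = lam ^ k * p X)
    (hPpoly : ∀ p ∈ P, ∃ Q : MvPolynomial (Fin (n + 1)) ℝ,
      ∀ X : EuclideanSpace ℝ (Fin (n + 1)), p X = MvPolynomial.eval (fun i => X i) Q)
    (hcompact : ∀ rj : ℕ → ℝ, (∀ j, rj j ∈ Set.Ioo (0 : ℝ) R) →
      Tendsto rj atTop (nhds 0) →
      ∃ φ : ℕ → ℕ, StrictMono φ ∧ ∃ p ∈ P,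
        ∀ K : Set (EuclideanSpace ℝ (Fin (n + 1))), IsCompact K →
          TendstoUniformlyOn
            (fun j X => u (X₀ + (rj (φ j)) • X) / (rj (φ j)) ^ k) p atTop K)
    (hsep : ∀ p ∈ P, ∀ q ∈ P,
      (∫ ω, |(ω : EuclideanSpace ℝ (Fin (n + 1))) (Fin.last n)| ^ a *
          (p (ω : EuclideanSpace ℝ (Fin (n + 1))) -
            q (ω : EuclideanSpace ℝ (Fin (n + 1)))) ^ 2 ∂(sphereMeasure n)) = 0 →
      p = q)
    (hMonneau : ∀ p ∈ P, MonotoneOn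
      (fun r => r ^ (-((n : ℝ) + a + 2 * k)) *
        sphInt n (fun X => |X (Fin.last n)| ^ a * (u X - p (X - X₀)) ^ 2) X₀ r)
      (Set.Ioo (0 : ℝ) R)) :
    ∃! p : EuclideanSpace ℝ (Fin (n + 1)) → ℝ,
      p ∈ P ∧ p ≠ 0 ∧
      ∀ K : Set (EuclideanSpace ℝ (Fin (n + 1))), IsCompact K →
        TendstoUniformlyOn (fun r X => u (X₀ + r • X) / r ^ k) p
          (nhdsWithin 0 (Set.Ioi 0)) K := by
  classical
  -- continuity of elements of `P`
  have pcont : ∀ p ∈ P, Continuous p := by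
    intro p hp
    obtain ⟨Q, hQ⟩ := hPpoly p hp
    have hpe : p = fun X => MvPolynomial.eval (fun i => X i) Q := funext hQ
    rw [hpe]
    have hc1 : Continuous fun v : Fin (n + 1) → ℝ => MvPolynomial.eval v Q :=
      MvPolynomial.continuous_eval (p := Q)
    have hc2 : Continuous fun X : EuclideanSpace ℝ (Fin (n + 1)) =>
        (fun i => X i : Fin (n + 1) → ℝ) :=
      continuous_pi fun i => continuous_coord n i
    exact hc1.comp hc2
  have hsub : ∀ r ∈ Set.Ioo (0 : ℝ) R, Metric.sphere X₀ r ⊆ Metric.ball X₀ R := by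
    intro r hr X hX
    rw [Metric.mem_ball]
    rw [Metric.mem_sphere] at hX
    rw [hX]; exact hr.2
  have hbound : ∀ r ∈ Set.Ioo (0 : ℝ) R, ∀ X ∈ Metric.sphere X₀ r, |u X| ≤ C * r ^ k := by
    intro r hr X hX
    obtain ⟨B, hB⟩ := (isCompact_sphere X₀ r).exists_bound_of_continuousOn
      (hu.mono (hsub r hr))
    refine (le_biSup_of (f := fun Y => |u Y|) (B := B) ?_ hX).trans (hgrowth r hr).2
    intro Y hY
    simpa [Real.norm_eq_abs] using hB Y hY
  have hnondeg : ∀ r ∈ Set.Ioo (0 : ℝ) R, ∃ X ∈ Metric.sphere X₀ r, c * r ^ k / 2 < |u X| := by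
    intro r hr
    by_contra hcon
    push_neg at hcon
    have hnn : (0 : ℝ) ≤ c * r ^ k / 2 := by
      have := Real.rpow_nonneg hr.1.le k
      positivity
    have h1 := biSup_le_of (S := Metric.sphere X₀ r) (f := fun Y => |u Y|) hnn hcon
    have h2 := (hgrowth r hr).1
    have h3 : (0 : ℝ) < c * r ^ k := mul_pos hc (Real.rpow_pos_of_pos hr.1 k)
    linarith
  -- canonical vanishing sequence
  set r0 : ℕ → ℝ := fun j => (R / 2) * (2⁻¹ : ℝ) ^ j with hr0def
  have hr0 : ∀ j, r0 j ∈ Set.Ioo (0 : ℝ) R := by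
    intro j
    constructor
    · have : (0:ℝ) < (2⁻¹ : ℝ) ^ j := pow_pos (by norm_num) j
      rw [hr0def]; positivity
    · have h1 : (2⁻¹ : ℝ) ^ j ≤ 1 := pow_le_one₀ (by norm_num) (by norm_num)
      have h2 : (R / 2) * (2⁻¹ : ℝ) ^ j ≤ (R / 2) * 1 :=
        mul_le_mul_of_nonneg_left h1 (by positivity)
      rw [hr0def]
      simp only
      linarith
  have hr0t : Tendsto r0 atTop (𝓝 0) := by
    have h := tendsto_pow_atTop_nhds_zero_of_lt_one (by norm_num : (0:ℝ) ≤ 2⁻¹)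
      (by norm_num : (2⁻¹ : ℝ) < 1)
    have := h.const_mul (R / 2)
    simpa [hr0def] using this
  obtain ⟨φ, hφ, p, hpP, hpconv⟩ := hcompact r0 hr0 hr0t
  -- nondegeneracy of the limit
  have hpne : p ≠ 0 := by
    intro h0
    have hconvS := hpconv _ (isCompact_sphere (0 : EuclideanSpace ℝ (Fin (n+1))) 1)
    rw [Metric.tendstoUniformlyOn_iff] at hconvS
    have hce : (0:ℝ) < c / 4 := by linarith
    obtain ⟨j, hj⟩ := (hconvS (c / 4) hce).exists
    set r := r0 (φ j) with hrdef
    have hrI := hr0 (φ j)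
    obtain ⟨Y, hY, hYlt⟩ := hnondeg r hrI
    set X : EuclideanSpace ℝ (Fin (n+1)) := r⁻¹ • (Y - X₀) with hXdef
    have hrne : r ≠ 0 := ne_of_gt hrI.1
    have hXY : X₀ + r • X = Y := by
      rw [hXdef, smul_inv_smul₀ hrne, add_sub_cancel]
    have hXS : X ∈ Metric.sphere (0 : EuclideanSpace ℝ (Fin (n+1))) 1 := by
      rw [mem_sphere_zero_iff_norm, hXdef, norm_smul, norm_inv, Real.norm_eq_abs,
        abs_of_pos hrI.1, ← dist_eq_norm, Metric.mem_sphere.mp hY]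
      exact inv_mul_cancel₀ hrne
    have hd := hj X hXS
    rw [hXY] at hd
    have hrk : (0:ℝ) < r ^ k := Real.rpow_pos_of_pos hrI.1 k
    have h5 : c / 2 < |u Y / r ^ k| := by
      rw [abs_div, abs_of_pos hrk, lt_div_iff₀ hrk]
      have he : c / 2 * r ^ k = c * r ^ k / 2 := by ring
      rw [he]
      exact hYlt
    rw [h0] at hd
    rw [Real.dist_eq] at hd
    simp only [Pi.zero_apply, zero_sub, abs_neg] at hd
    linarith
  -- the Monneau quantity along rescalings
  set G : ℝ → ℝ := fun r => ∫ ω, |(ω : EuclideanSpace ℝ (Fin (n+1))) (Fin.last n)| ^ a *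
      (u (X₀ + r • (ω : EuclideanSpace ℝ (Fin (n+1)))) / r ^ k -
        p (ω : EuclideanSpace ℝ (Fin (n+1)))) ^ 2 ∂(sphereMeasure n) with hGdef
  have hGnonneg : ∀ r, 0 ≤ G r := by
    intro r
    refine integral_nonneg fun ω => ?_
    exact mul_nonneg (Real.rpow_nonneg (abs_nonneg _) _) (sq_nonneg _)
  have hGM : ∀ r ∈ Set.Ioo (0:ℝ) R,
      r ^ (-((n : ℝ) + a + 2 * k)) *
        sphInt n (fun X => |X (Fin.last n)| ^ a * (u X - p (X - X₀)) ^ 2) X₀ r = G r :=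
    fun r hr => monneau_eq n a k X₀ hX₀ u p (fun lam hl X => hPhom p hpP lam hl X) hr.1
  have hG0 : Tendsto (fun j => G (r0 (φ j))) atTop (𝓝 0) := by
    have h := dct n ha hC X₀ u hu hbound p p (pcont p hpP)
      (fun j => r0 (φ j)) (fun j => hr0 (φ j))
      (hpconv _ (isCompact_sphere (0 : EuclideanSpace ℝ (Fin (n+1))) 1))
    simpa [hGdef] using h
  have hGsmall : ∀ ε > 0, ∀ᶠ r in 𝓝[>] (0:ℝ), G r < ε := by
    intro ε hε
    obtain ⟨j, hj⟩ := (hG0.eventually (gt_mem_nhds hε)).exists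
    set t := r0 (φ j) with htdef
    have htI := hr0 (φ j)
    filter_upwards [Ioo_mem_nhdsGT_of_mem
      (show (0:ℝ) ∈ Set.Ico (0:ℝ) t from ⟨le_rfl, htI.1⟩)] with r hr
    have hrI : r ∈ Set.Ioo (0:ℝ) R := ⟨hr.1, hr.2.trans htI.2⟩
    have hmono := hMonneau p hpP hrI htI hr.2.le
    simp only at hmono
    rw [hGM r hrI, hGM t htI] at hmono
    exact lt_of_le_of_lt hmono hj
  -- full convergence on compacts
  have main : ∀ K : Set (EuclideanSpace ℝ (Fin (n+1))), IsCompact K →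
      TendstoUniformlyOn (fun r X => u (X₀ + r • X) / r ^ k) p (𝓝[>] (0:ℝ)) K := by
    intro K hK
    rw [Metric.tendstoUniformlyOn_iff]
    intro ε hε
    by_contra hbad
    rw [Filter.not_eventually] at hbad
    have hsel : ∀ j : ℕ, ∃ r : ℝ, r ∈ Set.Ioo (0:ℝ) (min R (1 / (j + 1))) ∧
        ¬ ∀ x ∈ K, dist (p x) (u (X₀ + r • x) / r ^ k) < ε := by
      intro j
      have hmemU : Set.Ioo (0:ℝ) (min R (1 / (j + 1))) ∈ 𝓝[>] (0:ℝ) :=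
        Ioo_mem_nhdsGT_of_mem ⟨le_rfl, lt_min hR (by positivity)⟩
      obtain ⟨r, hrU, hrbad⟩ := Filter.frequently_iff.mp hbad hmemU
      exact ⟨r, hrU, hrbad⟩
    choose s hsmem hsbad using hsel
    have hsI : ∀ j, s j ∈ Set.Ioo (0:ℝ) R :=
      fun j => ⟨(hsmem j).1, (hsmem j).2.trans_le (min_le_left _ _)⟩
    have hst : Tendsto s atTop (𝓝 0) := by
      refine tendsto_of_tendsto_of_tendsto_of_le_of_le
        (g := fun _ : ℕ => (0:ℝ)) (h := fun j : ℕ => 1 / ((j : ℝ) + 1))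
        tendsto_const_nhds tendsto_one_div_add_atTop_nhds_zero_nat
        (fun j => (hsmem j).1.le)
        (fun j => ((hsmem j).2.trans_le (min_le_right _ _)).le)
    obtain ⟨ψ, hψ, q, hqP, hqconv⟩ := hcompact s hsI hst
    have hs'I : ∀ j, s (ψ j) ∈ Set.Ioo (0:ℝ) R := fun j => hsI (ψ j)
    have hGq : Tendsto (fun j => G (s (ψ j))) atTop
        (𝓝 (∫ ω, |(ω : EuclideanSpace ℝ (Fin (n+1))) (Fin.last n)| ^ a *
          (q (ω : EuclideanSpace ℝ (Fin (n+1))) -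
            p (ω : EuclideanSpace ℝ (Fin (n+1)))) ^ 2 ∂(sphereMeasure n))) := by
      have h := dct n ha hC X₀ u hu hbound p q (pcont p hpP)
        (fun j => s (ψ j)) hs'I
        (hqconv _ (isCompact_sphere (0 : EuclideanSpace ℝ (Fin (n+1))) 1))
      simpa [hGdef] using h
    have hstψ : Tendsto (fun j => s (ψ j)) atTop (𝓝[>] (0:ℝ)) := by
      refine tendsto_nhdsWithin_of_tendsto_nhds_of_eventually_within _
        (hst.comp hψ.tendsto_atTop) (Eventually.of_forall fun j => (hs'I j).1)
    have hGq0 : Tendsto (fun j => G (s (ψ j))) atTop (𝓝 0) := by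
      rw [Metric.tendsto_nhds]
      intro ε' hε'
      filter_upwards [hstψ.eventually (hGsmall ε' hε')] with j hj
      rw [Real.dist_eq, sub_zero, abs_of_nonneg (hGnonneg _)]
      exact hj
    have hint0 : (∫ ω, |(ω : EuclideanSpace ℝ (Fin (n+1))) (Fin.last n)| ^ a *
        (q (ω : EuclideanSpace ℝ (Fin (n+1))) -
          p (ω : EuclideanSpace ℝ (Fin (n+1)))) ^ 2 ∂(sphereMeasure n)) = 0 :=
      tendsto_nhds_unique hGq hGq0
    have hqp : p = q := by
      apply hsep p hpP q hqP
      rw [← hint0]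
      congr 1
      funext ω
      ring
    have hcv := hqconv K hK
    rw [← hqp] at hcv
    rw [Metric.tendstoUniformlyOn_iff] at hcv
    obtain ⟨j, hj⟩ := (hcv ε hε).exists
    exact hsbad (ψ j) hj
  refine ⟨p, ⟨hpP, hpne, main⟩, ?_⟩
  rintro p' ⟨hp'P, hp'ne, hp'conv⟩
  funext X
  have h1 := (hp'conv {X} isCompact_singleton).tendsto_at (Set.mem_singleton X)
  have h2 := (main {X} isCompact_singleton).tendsto_at (Set.mem_singleton X)
  exact tendsto_nhds_unique h1 h2
end
end
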